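/- In a convex geometry F on a finite set X, any two consecutive members of a maximal chain of closed sets differ by exactly one element: if F, G ∈ F with G ⊊ F and no closed set lies strictly between them, then |F \ G| = 1. -/

import Mathlib

open Set

variable {X Y Z : Type*}

/-- A choice function: `f A ⊆ A` for all `A`. -/
def IsChoice (f : Set X → Set X) : Prop := ∀ A, f A ⊆ A

/-- A Plott function: choice function satisfying path independence. -/
def IsPlott (f : Set X → Set X) : Prop :=
  IsChoice f ∧ ∀ A B : Set X, f (A ∪ B) = f (f A ∪ B)

/-- Closure in a family of sets: intersection of all members containing `A`. -/
def closureOf (𝓕 : Set (Set X)) (A : Set X) : Set X := ⋂₀ {F | F ∈ 𝓕 ∧ A ⊆ F}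

/-- Extreme points of `A` with respect to the closure system `𝓕`. -/
def extPts (𝓕 : Set (Set X)) (A : Set X) : Set X :=
  {a ∈ A | a ∉ closureOf 𝓕 (A \ {a})}

/-- Convex geometry: contains `univ`, closed under intersection, MKM property. -/
def IsConvexGeometry (𝓕 : Set (Set X)) : Prop :=
  Set.univ ∈ 𝓕 ∧ (∀ F ∈ 𝓕, ∀ G ∈ 𝓕, F ∩ G ∈ 𝓕) ∧
    ∀ A : Set X, closureOf 𝓕 A = closureOf 𝓕 (extPts 𝓕 A)

/-- Intersection of a finite nonempty family closed under pairwise intersection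
belongs to the family. -/
lemma sInter_mem_of_closed_inter {α : Type*} (S : Set (Set α)) (hfin : S.Finite)
    (hcl : ∀ a ∈ S, ∀ b ∈ S, a ∩ b ∈ S) :
    ∀ T ⊆ S, T.Nonempty → ⋂₀ T ∈ S := by
  intro T hTS hTne
  have hTfin : T.Finite := hfin.subset hTS
  refine Set.Finite.induction_on (motive := fun T _ => T ⊆ S → T.Nonempty → ⋂₀ T ∈ S)
    T hTfin (fun _ h => absurd h (by simp)) ?_ hTS hTne
  intro a s has hsfin ih hsubS hne
  rcases s.eq_empty_or_nonempty with rfl | hsne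
  · simpa using hsubS (mem_insert a _)
  · have h1 : ⋂₀ s ∈ S := ih (fun x hx => hsubS (mem_insert_of_mem a hx)) hsne
    have h2 : a ∈ S := hsubS (mem_insert a _)
    rw [sInter_insert]
    exact hcl a h2 _ h1

/-- adjacent closed sets in a convex geometry differ by one element. -/
theorem convexGeometry_adjacent_diff_singleton {X : Type*} [Fintype X]
    (𝓕 : Set (Set X)) (h𝓕 : IsConvexGeometry 𝓕)
    (F G : Set X) (hF : F ∈ 𝓕) (hG : G ∈ 𝓕) (hGF : G ⊂ F)
    (hadj : ¬ ∃ H ∈ 𝓕, G ⊂ H ∧ H ⊂ F) :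
    (F \ G).ncard = 1 := by
  obtain ⟨huniv, hinter, hMKM⟩ := h𝓕
  -- basic closure facts
  have hsub : ∀ A : Set X, A ⊆ closureOf 𝓕 A := by
    intro A x hx K hK
    exact hK.2 hx
  have hmin : ∀ (A K : Set X), K ∈ 𝓕 → A ⊆ K → closureOf 𝓕 A ⊆ K := by
    intro A K hK hAK
    exact sInter_subset_of_mem ⟨hK, hAK⟩
  have hclmem : ∀ A : Set X, closureOf 𝓕 A ∈ 𝓕 := by
    intro A
    apply sInter_mem_of_closed_inter 𝓕 (Set.toFinite 𝓕)
      hinter {K | K ∈ 𝓕 ∧ A ⊆ K} (fun K hK => hK.1) ⟨univ, huniv, subset_univ A⟩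
  have hGcl : closureOf 𝓕 G = G :=
    subset_antisymm (hmin G G hG subset_rfl) (hsub G)
  have hFcl : closureOf 𝓕 F = F :=
    subset_antisymm (hmin F F hF subset_rfl) (hsub F)
  -- key: closure of G ∪ {x} is F for any x ∈ F \ G
  have key : ∀ x ∈ F \ G, closureOf 𝓕 (G ∪ {x}) = F := by
    intro x hx
    set H := closureOf 𝓕 (G ∪ {x}) with hH
    have hHmem : H ∈ 𝓕 := hclmem _
    have hHF : H ⊆ F := hmin _ F hF (union_subset hGF.1 (by simpa using hx.1))
    have hGH : G ⊂ H := by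
      refine ⟨subset_trans subset_union_left (hsub _), fun hcon => hx.2 ?_⟩
      exact hcon (hsub _ (mem_union_right _ rfl))
    by_contra hne
    exact hadj ⟨H, hHmem, hGH, ⟨hHF, fun hcon => hne (subset_antisymm hHF hcon)⟩⟩
  -- any two elements of F \ G coincide
  have uniq : ∀ x ∈ F \ G, ∀ y ∈ F \ G, x = y := by
    intro x hx y hy
    by_contra hxy
    -- then no element of F \ G is extreme in F
    have hext : extPts 𝓕 F ⊆ G := by
      intro a ha
      by_contra haG
      have haFG : a ∈ F \ G := ⟨ha.1, haG⟩
      -- pick z ∈ {x, y} with z ≠ a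
      obtain ⟨z, hz, hza⟩ : ∃ z ∈ F \ G, z ≠ a := by
        by_cases h : x = a
        · exact ⟨y, hy, fun h' => hxy (h.trans h'.symm)⟩
        · exact ⟨x, hx, h⟩
      have hsubFa : G ∪ {z} ⊆ F \ {a} := by
        rintro w (hw | hw)
        · exact ⟨hGF.1 hw, fun h => haG (h ▸ hw)⟩
        · rcases hw with rfl
          exact ⟨hz.1, hza⟩
      have : a ∈ closureOf 𝓕 (F \ {a}) := by
        have h1 : closureOf 𝓕 (G ∪ {z}) ⊆ closureOf 𝓕 (F \ {a}) :=
          hmin _ _ (hclmem _) (hsubFa.trans (hsub _))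
        exact h1 (by rw [key z hz]; exact ha.1)
      exact ha.2 this
    have : F ⊆ G := by
      calc F = closureOf 𝓕 F := hFcl.symm
        _ = closureOf 𝓕 (extPts 𝓕 F) := hMKM F
        _ ⊆ G := hmin _ G hG hext
    exact hx.2 (this hx.1)
  -- conclude
  obtain ⟨a, ha⟩ := (Set.diff_nonempty).mpr (fun h => hGF.2 h)
  rw [Set.ncard_eq_one]
  exact ⟨a, subset_antisymm (fun y hy => (uniq y hy a ha)) (by simpa using ha)⟩
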